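/- For any α > 1 and any t ∈ [−1/2, 1], (1+t)^((α−1)/α) ≥ 1 + ((α−1)/α)·t − ((α−1)/α²)·t². -/

import Mathlib

open Real Set
/-- Case `t ≥ 0` of the Taylor bound, for `p + q = 1`, `0 < p`, `0 < q`. -/
lemma taylor_lb_nonneg {p q t : ℝ} (hp : 0 < p) (hq : 0 < q) (hpq : p + q = 1)
    (ht : 0 ≤ t) : 1 + p * t - p * q * t ^ 2 ≤ (1 + t) ^ p := by
  have h1t : (0:ℝ) < 1 + t := by linarith
  have hqt : (0:ℝ) < 1 + q * t := by nlinarith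
  have hber : (1 + t) ^ q ≤ 1 + q * t :=
    rpow_one_add_le_one_add_mul_self (by linarith) hq.le (by linarith)
  have hsplit : (1 + t) ^ p * (1 + t) ^ q = 1 + t := by
    rw [← Real.rpow_add h1t, hpq, Real.rpow_one]
  have hposq : (0:ℝ) < (1 + t) ^ q := Real.rpow_pos_of_pos h1t _
  -- (1+t)^p ≥ (1+t)/(1+qt)
  have key : (1 + t) / (1 + q * t) ≤ (1 + t) ^ p := by
    rw [div_le_iff₀ hqt]
    calc (1 + t) = (1 + t) ^ p * (1 + t) ^ q := hsplit.symm
    _ ≤ (1 + t) ^ p * (1 + q * t) := by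
        apply mul_le_mul_of_nonneg_left hber (Real.rpow_pos_of_pos h1t _).le
  refine le_trans ?_ key
  rw [le_div_iff₀ hqt]
  nlinarith [sq_nonneg t, mul_nonneg (mul_nonneg hp.le (sq_nonneg q)) (pow_nonneg ht 3)]

/-- Derivative bound for the negative case. -/
lemma taylor_lb_neg {p q t : ℝ} (hp : 0 < p) (hq : 0 < q) (hpq : p + q = 1)
    (ht1 : -(1/2) ≤ t) (ht0 : t ≤ 0) : 1 + p * t - p * q * t ^ 2 ≤ (1 + t) ^ p := by
  set F : ℝ → ℝ := fun s => (1 + s) ^ p - (1 + p * s - p * q * s ^ 2) with hF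
  have hpos : ∀ s ∈ Icc (-(1/2):ℝ) 0, (0:ℝ) < 1 + s := fun s hs => by
    have := hs.1; linarith
  have hderiv : ∀ s ∈ Ioo (-(1/2):ℝ) 0,
      HasDerivAt F (p * (1 + s) ^ (p - 1) - (p - 2 * (p * q) * s)) s := by
    intro s hs
    have h1s : (0:ℝ) < 1 + s := by have := hs.1; linarith
    have h1 : HasDerivAt (fun s : ℝ => (1 + s) ^ p) (1 * p * (1 + s) ^ (p - 1)) s :=
      ((hasDerivAt_id s).const_add 1).rpow_const (Or.inl h1s.ne')
    have h2 : HasDerivAt (fun s : ℝ => 1 + p * s - p * q * s ^ 2)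
        (p - 2 * (p * q) * s) s := by
      have := ((hasDerivAt_id s).const_mul p).const_add 1
      have h3 := ((hasDerivAt_pow 2 s).const_mul (p * q))
      exact ((((hasDerivAt_id s).const_mul p).const_add (1:ℝ)).sub h3).congr_deriv
        (by rw [show (2:ℕ) - 1 = 1 from rfl, pow_one]; push_cast; ring)
    exact (h1.sub h2).congr_deriv (by ring)
  have hderiv_nonpos : ∀ s ∈ Ioo (-(1/2):ℝ) 0,
      p * (1 + s) ^ (p - 1) - (p - 2 * (p * q) * s) ≤ 0 := by
    intro s hs
    obtain ⟨hs1, hs2⟩ := hs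
    have h1s : (0:ℝ) < 1 + s := by linarith
    have hpt : (0:ℝ) < 1 + p * s := by nlinarith
    -- (1+s)^p ≤ 1 + p s
    have hber : (1 + s) ^ p ≤ 1 + p * s :=
      rpow_one_add_le_one_add_mul_self (by linarith) hp.le (by linarith)
    have hposp : (0:ℝ) < (1 + s) ^ p := Real.rpow_pos_of_pos h1s _
    -- (1+s)^(p-1) = (1+s)^p / (1+s)
    have hsplit : (1 + s) ^ (p - 1) = (1 + s) ^ p / (1 + s) := by
      rw [Real.rpow_sub h1s, Real.rpow_one]
    -- goal: (1+s)^(p-1) ≤ 1 - 2 q s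
    have key : (1 + s) ^ (p - 1) ≤ 1 - 2 * q * s := by
      rw [hsplit, div_le_iff₀ h1s]
      calc (1 + s) ^ p ≤ 1 + p * s := hber
        _ ≤ (1 - 2 * q * s) * (1 + s) := by
            nlinarith [mul_nonneg (mul_nonneg hq.le (by linarith : (0:ℝ) ≤ -s))
              (by linarith : (0:ℝ) ≤ 1 + 2 * s)]
    nlinarith
  have hcont : ContinuousOn F (Icc (-(1/2):ℝ) 0) := by
    apply ContinuousOn.sub
    · exact (continuousOn_const.add continuousOn_id).rpow_const
        (fun s hs => Or.inl (hpos s hs).ne')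
    · fun_prop
  have hanti : AntitoneOn F (Icc (-(1/2):ℝ) 0) := by
    apply antitoneOn_of_deriv_nonpos (convex_Icc _ _) hcont
    · intro s hs
      rw [interior_Icc] at hs
      exact (hderiv s hs).differentiableAt.differentiableWithinAt
    · intro s hs
      rw [interior_Icc] at hs
      rw [(hderiv s hs).deriv]
      exact hderiv_nonpos s hs
  have h0 : F 0 = 0 := by simp [hF, Real.one_rpow]
  have := hanti (Set.mem_Icc.mpr ⟨ht1, ht0⟩) (Set.mem_Icc.mpr ⟨by norm_num, le_refl 0⟩) ht0
  rw [h0] at this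
  simpa [hF, sub_nonneg] using this


/-- Taylor-type lower bound: for `α > 1` and `t ∈ [−1/2, 1]`,
`(1+t)^((α−1)/α) ≥ 1 + ((α−1)/α) t − ((α−1)/α²) t²`. -/
theorem rpow_taylor_lower_bound (α t : ℝ) (hα : 1 < α)
    (ht1 : -(1/2) ≤ t) (ht2 : t ≤ 1) :
    1 + ((α - 1) / α) * t - ((α - 1) / α ^ 2) * t ^ 2 ≤ (1 + t) ^ ((α - 1) / α) := by
  have hα0 : (0:ℝ) < α := by linarith
  set p := (α - 1) / α with hp'
  set q := 1 / α with hq'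
  have hp : 0 < p := div_pos (by linarith) hα0
  have hq : 0 < q := by positivity
  have hpq : p + q = 1 := by
    rw [hp', hq', ← add_div, div_eq_one_iff_eq hα0.ne']; ring
  have hcoef : (α - 1) / α ^ 2 = p * q := by
    rw [hp', hq']; ring
  rw [hcoef]
  rcases le_or_gt 0 t with ht | ht
  · exact taylor_lb_nonneg hp hq hpq ht
  · exact taylor_lb_neg hp hq hpq ht1 ht.le
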